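/- Let p be a prime, d ≥ 1, and Φ a d×d matrix over ℤ_p defining the endomorphism φ(x) = Φ·x of the group ℤ_p^d. If det(Φ − Id) ≠ 0, then the Reidemeister number of φ is finite and R(φ) = |Coker(Id − φ)| = ‖det(Φ − Id)‖_p^{-1}, where Coker(Id − φ) = ℤ_p^d / Im(Id − φ). -/

import Mathlib

open PadicInt in
lemma padic_quot_span_aux (p : ℕ) [Fact p.Prime] (a : ℤ_[p]) (ha : a ≠ 0) :
    Finite (ℤ_[p] ⧸ Ideal.span {a}) ∧
      (Nat.card (ℤ_[p] ⧸ Ideal.span {a}) : ℝ) = ‖a‖⁻¹ := by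
  set n := a.valuation with hn
  haveI : NeZero (p ^ n) := ⟨pow_ne_zero n (Nat.Prime.ne_zero Fact.out)⟩
  have hspan : Ideal.span {a} = Ideal.span {(p : ℤ_[p]) ^ n} := by
    apply (Ideal.span_singleton_eq_span_singleton.mpr _)
    exact Associated.symm ⟨unitCoeff ha, (mul_comm _ _).trans (unitCoeff_spec ha).symm⟩
  have hker : Ideal.span {a} = RingHom.ker (toZModPow (p := p) n) := by
    rw [hspan, ker_toZModPow]
  have hsurj : Function.Surjective (toZModPow (p := p) n) := by
    intro x
    obtain ⟨k, rfl⟩ := ZMod.natCast_zmod_surjective (n := p ^ n) x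
    exact ⟨k, map_natCast _ k⟩
  let e : (ℤ_[p] ⧸ Ideal.span {a}) ≃ ZMod (p ^ n) :=
    (Ideal.quotEquivOfEq hker).toEquiv.trans
      (RingHom.quotientKerEquivOfSurjective hsurj).toEquiv
  have hval : (n : ℤ) = a.valuation := rfl
  constructor
  · exact Finite.of_equiv _ e.symm
  · rw [Nat.card_congr e, Nat.card_zmod, norm_eq_zpow_neg_valuation ha, ← hval]
    push_cast
    rw [zpow_neg, inv_inv, ← zpow_natCast]

open Matrix in
lemma padic_mulVec_injective (p : ℕ) [Fact p.Prime] (d : ℕ)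
    (M : Matrix (Fin d) (Fin d) ℤ_[p]) (hM : M.det ≠ 0) :
    Function.Injective M.mulVecLin := by
  rw [← LinearMap.ker_eq_bot, Matrix.ker_mulVecLin_eq_bot_iff]
  intro v hv
  have h2 : M.det • v = 0 := by
    have h3 := congrArg (fun w => M.adjugate.mulVec w) hv
    simpa [Matrix.mulVec_mulVec, Matrix.adjugate_mul, Matrix.smul_mulVec,
      Matrix.one_mulVec, Matrix.mulVec_zero] using h3
  funext i
  have := congrFun h2 i
  simp only [Pi.smul_apply, smul_eq_mul, Pi.zero_apply, mul_eq_zero] at this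
  exact this.resolve_left hM

set_option synthInstance.maxHeartbeats 1000000 in
set_option maxHeartbeats 1000000 in
open Matrix in
lemma padic_coker_card (p : ℕ) [Fact p.Prime] (d : ℕ)
    (M : Matrix (Fin d) (Fin d) ℤ_[p]) (hM : M.det ≠ 0) :
    Finite ((Fin d → ℤ_[p]) ⧸ LinearMap.range M.mulVecLin) ∧
      (Nat.card ((Fin d → ℤ_[p]) ⧸ LinearMap.range M.mulVecLin) : ℝ) = ‖M.det‖⁻¹ := by
  set T := M.mulVecLin with hTdef
  have hT : Function.Injective T := padic_mulVec_injective p d M hM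
  obtain ⟨n, snf⟩ := Submodule.smithNormalForm (Pi.basisFun ℤ_[p] (Fin d)) (LinearMap.range T)
  have hn : n = d := by
    have e1 : (Fin d → ℤ_[p]) ≃ₗ[ℤ_[p]] LinearMap.range T := LinearEquiv.ofInjective T hT
    have h1 : Module.finrank ℤ_[p] (LinearMap.range T) = d := by
      rw [← e1.finrank_eq]
      simp [Module.finrank_pi]
    have h2 := Module.finrank_eq_card_basis snf.bN
    rw [h1, Fintype.card_fin] at h2
    omega
  have hn' : d = n := hn.symm
  subst hn'
  obtain ⟨bM, bN, f, a, hsnf⟩ := snf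
  have hfbij : Function.Bijective f := Finite.injective_iff_bijective.mp f.injective
  let e : Fin d ≃ Fin d := Equiv.ofBijective f hfbij
  have hef : ∀ i, e i = f i := fun i => rfl
  have ha : ∀ i, a i ≠ 0 := by
    intro i hai
    have h0 := hsnf i
    rw [hai, zero_smul] at h0
    exact bN.ne_zero i (Subtype.ext h0)
  -- the quotient map
  let q : (Fin d → ℤ_[p]) →ₗ[ℤ_[p]] ∀ i : Fin d, ℤ_[p] ⧸ Ideal.span {a i} :=
    LinearMap.pi fun i => (Ideal.span {a i}).mkQ.comp (bM.coord (f i))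
  have hq_apply : ∀ x i, q x i = Submodule.Quotient.mk (bM.repr x (f i)) := fun x i => rfl
  have hq_surj : Function.Surjective q := by
    intro y
    choose c hc using fun i => Submodule.Quotient.mk_surjective (Ideal.span {a i}) (y i)
    refine ⟨bM.equivFun.symm fun j => c (e.symm j), ?_⟩
    funext i
    rw [hq_apply]
    have : bM.repr (bM.equivFun.symm fun j => c (e.symm j)) (f i) = c i := by
      rw [← Module.Basis.equivFun_apply, LinearEquiv.apply_symm_apply, ← hef i,
        Equiv.symm_apply_apply]
    rw [this, hc]
  have hker : LinearMap.range T = LinearMap.ker q := by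
    ext x
    constructor
    · intro hx
      obtain ⟨c, rfl⟩ := bN.mem_submodule_iff.mp hx
      rw [LinearMap.mem_ker]
      funext i
      rw [hq_apply, Pi.zero_apply, Submodule.Quotient.mk_eq_zero, Ideal.mem_span_singleton]
      have hrepr : bM.repr (c.sum fun j cj => cj • (bN j : Fin d → ℤ_[p])) (f i)
          = c i * a i := by
        rw [map_finsuppSum, Finsupp.sum_apply]
        have : ∀ j, (bM.repr (c j • (bN j : Fin d → ℤ_[p]))) (f i)
            = if j = i then c j * a j else 0 := by
          intro j
          rw [_root_.map_smul, hsnf j, _root_.map_smul, Module.Basis.repr_self]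
          simp [Finsupp.single_apply, f.injective.eq_iff, mul_comm]
          intro h2
          exact fun h3 => absurd h3 h2
        rw [Finsupp.sum]
        rw [Finset.sum_congr rfl fun j _ => this j]
        rw [Finset.sum_ite_eq' c.support i fun j => c j * a j]
        split_ifs with h
        · rfl
        · rw [Finsupp.notMem_support_iff.mp h, zero_mul]
      rw [hrepr]
      exact dvd_mul_left (a i) (c i)
    · intro hx
      rw [LinearMap.mem_ker] at hx
      have hdvd : ∀ i, ∃ ci, bM.repr x (f i) = a i * ci := by
        intro i
        have := congrFun hx i
        rw [hq_apply] at this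
        exact Ideal.mem_span_singleton.mp ((Submodule.Quotient.mk_eq_zero _).mp this)
      choose c hc using hdvd
      have hx2 : x = ∑ i, c i • (bN i : Fin d → ℤ_[p]) := by
        have h1 : x = ∑ j, bM.repr x j • bM j := (bM.sum_repr x).symm
        rw [h1, ← Equiv.sum_comp e fun j => bM.repr x j • bM j]
        refine Finset.sum_congr rfl fun i _ => ?_
        rw [hef, hsnf i, hc i, smul_smul, mul_comm]
      rw [hx2]
      exact Submodule.sum_mem _ fun i _ =>
        Submodule.smul_mem _ _ (SetLike.coe_mem (bN i))
  -- the linear equivalence with the product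
  let equiv2 : ((Fin d → ℤ_[p]) ⧸ LinearMap.range T) ≃ₗ[ℤ_[p]]
      ∀ i : Fin d, ℤ_[p] ⧸ Ideal.span {a i} :=
    (Submodule.quotEquivOfEq _ _ hker).trans
      ((q.quotKerEquivRange).trans (LinearEquiv.ofTop _ (LinearMap.range_eq_top.mpr hq_surj)))
  haveI hfin : ∀ i : Fin d, Finite (ℤ_[p] ⧸ Ideal.span {a i}) :=
    fun i => (padic_quot_span_aux p (a i) (ha i)).1
  -- determinant computation
  have hnorm_det : ‖M.det‖ = ∏ i, ‖a i‖ := by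
    let cb : Module.Basis (Fin d) ℤ_[p] (Fin d → ℤ_[p]) :=
      bN.map (LinearEquiv.ofInjective T hT).symm
    have hTc : ∀ i, T (cb i) = a i • bM (f i) := by
      intro i
      have h1 : T (cb i) = ((LinearEquiv.ofInjective T hT) (cb i) : Fin d → ℤ_[p]) :=
        (LinearEquiv.ofInjective_apply T (h := hT) (cb i)).symm
      rw [h1]
      show (((LinearEquiv.ofInjective T hT) ((LinearEquiv.ofInjective T hT).symm (bN i)) :
        LinearMap.range T) : Fin d → ℤ_[p]) = _
      rw [LinearEquiv.apply_symm_apply]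
      exact hsnf i
    have hmat : LinearMap.toMatrix cb bM T = (Matrix.diagonal a).submatrix e.symm id := by
      ext j i
      rw [LinearMap.toMatrix_apply, hTc, _root_.map_smul, Module.Basis.repr_self]
      simp only [Matrix.submatrix_apply, Matrix.diagonal_apply, id_eq,
        Finsupp.smul_single, smul_eq_mul, mul_one, Finsupp.single_apply]
      by_cases h : e.symm j = i
      · have h2 : f i = j := by rw [Equiv.symm_apply_eq] at h; rw [h, hef]
        rw [if_pos h, if_pos h2, h]
      · have h2 : ¬ f i = j := fun h2 => h (by rw [← h2, ← hef, Equiv.symm_apply_apply])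
        rw [if_neg h, if_neg h2]
    have hsign : ∀ u : ℤˣ, ‖((u : ℤ) : ℤ_[p])‖ = 1 := by
      intro u; rcases Int.units_eq_one_or u with h | h <;> simp [h]
    have hcomp : LinearMap.toMatrix cb bM T
        = LinearMap.toMatrix bM bM T * bM.toMatrix cb := by
      rw [← LinearMap.toMatrix_id_eq_basis_toMatrix, ← LinearMap.toMatrix_comp cb bM bM,
        LinearMap.comp_id]
    have hunit : IsUnit (bM.toMatrix cb).det := by
      refine IsUnit.of_mul_eq_one (cb.toMatrix bM).det ?_
      rw [← Matrix.det_mul, Module.Basis.toMatrix_mul_toMatrix_flip, Matrix.det_one]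
    have hdetM : (LinearMap.toMatrix bM bM T).det = M.det := by
      rw [LinearMap.det_toMatrix]
      rw [hTdef, ← Matrix.toLin'_apply', LinearMap.det_toLin']
    have hnorm_units : ‖(bM.toMatrix cb).det‖ = 1 := PadicInt.isUnit_iff.mp hunit
    have hprodnorm : ∀ s : Finset (Fin d), ‖∏ i ∈ s, a i‖ = ∏ i ∈ s, ‖a i‖ := by
      intro s
      induction s using Finset.cons_induction with
      | empty => simp
      | cons i s hi ih => rw [Finset.prod_cons, Finset.prod_cons, norm_mul, ih]
    calc ‖M.det‖ = ‖(LinearMap.toMatrix bM bM T).det‖ * ‖(bM.toMatrix cb).det‖ := by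
          rw [hnorm_units, mul_one, hdetM]
      _ = ‖(LinearMap.toMatrix cb bM T).det‖ := by rw [← norm_mul, ← Matrix.det_mul, ← hcomp]
      _ = ∏ i, ‖a i‖ := by
          rw [hmat, Matrix.det_permute, Matrix.det_diagonal, norm_mul,
            hsign, one_mul, hprodnorm]
  constructor
  · exact Finite.of_equiv _ equiv2.toEquiv.symm
  · rw [Nat.card_congr equiv2.toEquiv, Nat.card_pi]
    push_cast
    rw [Finset.prod_congr rfl fun i _ => (padic_quot_span_aux p (a i) (ha i)).2]
    rw [Finset.prod_inv_distrib, ← hnorm_det]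

/-- For the endomorphism `φ(x) = Φ·x` of `ℤ_p^d` with `det(Φ - Id) ≠ 0`, the
Reidemeister number is finite and equals the cardinality of the cokernel of
`Id - φ`, which is `‖det(Φ - Id)‖⁻¹`. -/
theorem reidemeister_number_padicInt_matrix (p : ℕ) [Fact p.Prime] (d : ℕ) (hd : 1 ≤ d)
    (Φ : Matrix (Fin d) (Fin d) ℤ_[p]) (h : (Φ - 1).det ≠ 0) :
    Finite (Quot (fun x y : Fin d → ℤ_[p] => ∃ b, y = x + b - Φ.mulVec b)) ∧
    Nat.card (Quot (fun x y : Fin d → ℤ_[p] => ∃ b, y = x + b - Φ.mulVec b)) =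
      Nat.card ((Fin d → ℤ_[p]) ⧸ LinearMap.range (Matrix.mulVecLin (1 - Φ))) ∧
    (Nat.card (Quot (fun x y : Fin d → ℤ_[p] => ∃ b, y = x + b - Φ.mulVec b)) : ℝ) =
      ‖(Φ - 1).det‖⁻¹ := by
  set N := LinearMap.range (Matrix.mulVecLin (1 - Φ)) with hN
  have key : ∀ x y : Fin d → ℤ_[p], (∃ b, y = x + b - Φ.mulVec b) ↔ x - y ∈ N := by
    intro x y
    constructor
    · rintro ⟨b, rfl⟩
      refine ⟨-b, ?_⟩
      simp only [Matrix.mulVecLin_apply, Matrix.sub_mulVec, Matrix.one_mulVec,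
        Matrix.mulVec_neg]
      abel
    · rintro ⟨b0, hb⟩
      refine ⟨-b0, ?_⟩
      have hb' : b0 - Φ.mulVec b0 = x - y := by
        simpa [Matrix.mulVecLin_apply, Matrix.sub_mulVec, Matrix.one_mulVec] using hb
      have hy : y = x - (b0 - Φ.mulVec b0) := by rw [hb']; abel
      rw [hy, Matrix.mulVec_neg]
      abel
  let E : Quot (fun x y : Fin d → ℤ_[p] => ∃ b, y = x + b - Φ.mulVec b) ≃
      ((Fin d → ℤ_[p]) ⧸ N) :=
    { toFun := Quot.lift (Submodule.Quotient.mk (p := N)) fun x y hxy =>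
        (Submodule.Quotient.eq N).mpr ((key x y).mp hxy)
      invFun := fun z => Quotient.liftOn' z (Quot.mk _) fun x y hxy =>
        Quot.sound ((key x y).mpr ((Submodule.quotientRel_def N).mp hxy))
      left_inv := by
        intro z
        induction z using Quot.ind
        rfl
      right_inv := by
        intro z
        induction z using Quotient.ind
        rfl }
  have hdet : (1 - Φ).det ≠ 0 := by
    rw [← neg_sub, Matrix.det_neg, Fintype.card_fin]
    intro h0
    rcases mul_eq_zero.mp h0 with h1 | h1
    · exact (isUnit_one.neg.pow d).ne_zero h1
    · exact h h1
  obtain ⟨hfin, hcard⟩ := padic_coker_card p d (1 - Φ) hdet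
  have hnorm : ‖(1 - Φ).det‖ = ‖(Φ - 1).det‖ := by
    rw [← neg_sub, Matrix.det_neg, Fintype.card_fin, norm_mul]
    rcases Nat.even_or_odd d with hpar | hpar
    · rw [hpar.neg_one_pow, norm_one, one_mul]
    · rw [hpar.neg_one_pow, norm_neg, norm_one, one_mul]
  refine ⟨Finite.of_equiv _ E.symm, Nat.card_congr E, ?_⟩
  rw [Nat.card_congr E, hcard, hnorm]
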